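/- Let g be an element of a finite subgroup G ⊂ SO(2n+1), n ≥ 2, in which every nontrivial element has eigenspace of eigenvalue 1 of dimension exactly one. Suppose g(v) = -v for some unit vector v with v not an eigenvector of eigenvalue 1 of g. Then g has order 2. -/

import Mathlib

/-- The dimension of the eigenspace of eigenvalue 1 of (the linear map given by) a matrix. -/
noncomputable def fixedSpaceDim {m : ℕ} (g : Matrix (Fin m) (Fin m) ℝ) : ℕ :=
  Module.finrank ℝ ↥(Module.End.eigenspace (Matrix.toLin' g) 1)

/-- Let `G` be a finite subgroup of `SO(2n+1)`, `n ≥ 2`, in which every nontrivial element has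
eigenspace of eigenvalue `1` of dimension exactly one. If `g ∈ G` sends some unit vector `v`
to `-v` (so `v` is not a fixed vector of `g`), then `g` has order `2`. -/
theorem order_two_of_antifixed_vector
    (n : ℕ) (hn : 2 ≤ n)
    (G : Subgroup (Matrix.orthogonalGroup (Fin (2*n+1)) ℝ)) (hG : Finite G)
    (hdet : ∀ h ∈ G, ((h : Matrix (Fin (2*n+1)) (Fin (2*n+1)) ℝ)).det = 1)
    (heig : ∀ h ∈ G, h ≠ 1 →
      fixedSpaceDim (h : Matrix (Fin (2*n+1)) (Fin (2*n+1)) ℝ) = 1)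
    (g : Matrix.orthogonalGroup (Fin (2*n+1)) ℝ) (hg : g ∈ G)
    (v : Fin (2*n+1) → ℝ) (hv : dotProduct v v = 1)
    (hgv : Matrix.mulVec (g : Matrix (Fin (2*n+1)) (Fin (2*n+1)) ℝ) v = -v)
    (hnotfix : Matrix.mulVec (g : Matrix (Fin (2*n+1)) (Fin (2*n+1)) ℝ) v ≠ v) :
    orderOf g = 2 := by
  classical
  set A : Matrix (Fin (2*n+1)) (Fin (2*n+1)) ℝ := (g : Matrix (Fin (2*n+1)) (Fin (2*n+1)) ℝ)
    with hA
  have hv0 : v ≠ 0 := by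
    intro h
    rw [h] at hv
    simp [dotProduct] at hv
  have hg1 : g ≠ 1 := by
    intro h
    apply hnotfix
    rw [hA, h]
    simp [Matrix.one_mulVec]
  -- g has a nonzero fixed vector u
  have hdim : fixedSpaceDim A = 1 := heig g hg hg1
  have hpos : 0 < Module.finrank ℝ ↥(Module.End.eigenspace (Matrix.toLin' A) 1) := by
    unfold fixedSpaceDim at hdim; omega
  obtain ⟨⟨u, hu_mem⟩, hu_ne⟩ := Module.finrank_pos_iff_exists_ne_zero.mp hpos
  have hu0 : u ≠ 0 := fun h => hu_ne (Subtype.ext h)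
  have hAu : Matrix.mulVec A u = u := by
    have := Module.End.mem_eigenspace_iff.mp hu_mem
    simpa [Matrix.toLin'_apply] using this
  -- v is not a fixed vector of g, so u, v are linearly independent
  have hli : LinearIndependent ℝ ![u, v] := by
    rw [LinearIndependent.pair_iff]
    intro s t hst
    have ht : t = 0 := by
      by_contra ht
      have h1 : t • v = (-s) • u := by
        rw [neg_smul, eq_comm, neg_eq_iff_add_eq_zero]
        exact hst
      have hveq : v = (t⁻¹ * (-s)) • u := by
        calc v = t⁻¹ • (t • v) := by rw [smul_smul, inv_mul_cancel₀ ht, one_smul]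
          _ = (t⁻¹ * (-s)) • u := by rw [h1, smul_smul]
      apply hnotfix
      rw [hA, hveq, Matrix.mulVec_smul, hAu]
    subst ht
    simp only [zero_smul, add_zero, smul_eq_zero] at hst
    exact ⟨hst.resolve_right hu0, rfl⟩
  -- g² fixes both u and v
  set B : Matrix (Fin (2*n+1)) (Fin (2*n+1)) ℝ := ((g*g : Matrix.orthogonalGroup (Fin (2*n+1)) ℝ) :
    Matrix (Fin (2*n+1)) (Fin (2*n+1)) ℝ) with hB
  have hBAA : B = A * A := rfl
  have hBu : Matrix.mulVec B u = u := by
    rw [hBAA, ← Matrix.mulVec_mulVec, hAu, hAu]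
  have hBv : Matrix.mulVec B v = v := by
    rw [hBAA, ← Matrix.mulVec_mulVec, hgv, Matrix.mulVec_neg, hgv, neg_neg]
  have hu_mem2 : u ∈ Module.End.eigenspace (Matrix.toLin' B) 1 := by
    rw [Module.End.mem_eigenspace_iff]
    simpa [Matrix.toLin'_apply] using hBu
  have hv_mem2 : v ∈ Module.End.eigenspace (Matrix.toLin' B) 1 := by
    rw [Module.End.mem_eigenspace_iff]
    simpa [Matrix.toLin'_apply] using hBv
  -- so the fixed space of g² has dimension ≥ 2, forcing g² = 1
  have hgg : g * g = 1 := by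
    by_contra hgg
    have hd2 : fixedSpaceDim B = 1 := heig (g*g) (mul_mem hg hg) hgg
    have hspan : Submodule.span ℝ (Set.range ![u, v]) ≤
        Module.End.eigenspace (Matrix.toLin' B) 1 := by
      rw [Submodule.span_le]
      rintro x ⟨i, rfl⟩
      fin_cases i
      · simpa using hu_mem2
      · simpa using hv_mem2
    have h2 : (2 : ℕ) ≤ fixedSpaceDim B := by
      have := Submodule.finrank_mono hspan
      rwa [finrank_span_eq_card hli, Fintype.card_fin] at this
    omega
  haveI : Fact (Nat.Prime 2) := ⟨by norm_num⟩
  exact orderOf_eq_prime (by rw [sq]; exact hgg) hg1
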